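/- Let c be a point and consider four rays from c in directions r₁, r₂, r₃, r₄ (in circular order), and four half-lines h₁, h₂, h₃, h₄ being the positive/negative coordinate axis directions from c. Suppose all four rays lie strictly inside one closed quadrant q. Then assigning the two 'inner' rays to the two axis half-lines bounding q (preserving circular order) and the two outer rays to the remaining two half-lines yields an assignment whose dependency chains have length at most 2 (dependency depth at most 1). -/

import Mathlib

open Real

set_option maxHeartbeats 1000000 in
/-- Case 1 of the assignment procedure of the 1-planar RAC₂ algorithm.  The four
edges incident to the crossing vertex are represented by their angles
`θ 0 < θ 1 < θ 2 < θ 3` (circular order), all lying strictly inside one quadrant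
(w.l.o.g. the first quadrant `(0, π/2)`).  The four axis-parallel half-lines are
represented by the angles `-π/2, 0, π/2, π`; assigning the two inner edges
`θ 1, θ 2` to the two half-lines `0, π/2` bounding the quadrant (preserving
circular order) forces `A = ![-π/2, 0, π/2, π]`.  Edge `i` depends on edge `j`
iff `θ j` lies strictly in the angular sector between `θ i` and the assigned
half-line `A i`.  The resulting dependency relation has no chain of three edges
(dependency depth at most 1). -/
theorem assignment_case1_dependency_depth
    (θ : Fin 4 → ℝ)
    (h0 : 0 < θ 0) (h01 : θ 0 < θ 1) (h12 : θ 1 < θ 2) (h23 : θ 2 < θ 3)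
    (h3 : θ 3 < π / 2) :
    let A : Fin 4 → ℝ := ![-(π / 2), 0, π / 2, π]
    let depends : Fin 4 → Fin 4 → Prop := fun i j =>
      θ j ∈ Set.Ioo (min (θ i) (A i)) (max (θ i) (A i))
    ∀ i j k : Fin 4, depends i j → ¬ depends j k := by
  intro A depends i j k hij hjk
  have hπ := Real.pi_pos
  have hc : ∀ m : Fin 4, m = 0 ∨ m = 1 ∨ m = 2 ∨ m = 3 := by decide
  rcases hc i with rfl | rfl | rfl | rfl <;> rcases hc j with rfl | rfl | rfl | rfl <;>
    rcases hc k with rfl | rfl | rfl | rfl <;>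
    simp only [A, depends, Matrix.cons_val_zero, Matrix.cons_val_one, Matrix.head_cons,
      Matrix.cons_val_two, Matrix.cons_val_three, Matrix.tail_cons,
      Set.mem_Ioo, min_lt_iff, lt_max_iff] at hij hjk <;>
    obtain ⟨a1 | a1, a2 | a2⟩ := hij <;> obtain ⟨b1 | b1, b2 | b2⟩ := hjk <;> linarith
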